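/- arXiv:2303.10588 — 5 statements merged into one kernel-verified Lean document; each statement's English description precedes it below -/
import Mathlib

section
/- Let Γ₁ ⊂ X₁ and Γ₂ ⊂ X₂ be continuous actions of discrete groups on topological spaces that are continuous orbit equivalent via a homeomorphism φ : X₁ → X₂ and continuous cocycle maps a : Γ₁ × X₁ → Γ₂, b : Γ₂ × X₂ → Γ₁ (so φ(γ·x) = a(γ,x)·φ(x) and φ⁻¹(η·y) = b(η,y)·φ⁻¹(y)). If the action Γ₂ ⊂ X₂ is topologically free, then a satisfies the cocycle identity: a(γ'γ, x) = a(γ', γ·x) · a(γ, x) for all γ, γ' ∈ Γ₁ and x ∈ X₁. -/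
/-- continuity of the cocycle `a` plus topological freeness of the
second action forces the cocycle identity
`a(γ'γ, x) = a(γ', γ·x) · a(γ, x)`. -/
theorem stmt0 {Γ₁ Γ₂ X₁ X₂ : Type*} [Group Γ₁] [Group Γ₂]
    [TopologicalSpace Γ₁] [DiscreteTopology Γ₁]
    [TopologicalSpace Γ₂] [DiscreteTopology Γ₂]
    [TopologicalSpace X₁] [TopologicalSpace X₂]
    [MulAction Γ₁ X₁] [MulAction Γ₂ X₂]
    [ContinuousConstSMul Γ₁ X₁] [ContinuousConstSMul Γ₂ X₂]
    (φ : X₁ ≃ₜ X₂) (a : Γ₁ × X₁ → Γ₂) (b : Γ₂ × X₂ → Γ₁)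
    (ha : Continuous a) (hb : Continuous b)
    (hφ : ∀ (γ : Γ₁) (x : X₁), φ (γ • x) = a (γ, x) • φ x)
    (hφ' : ∀ (η : Γ₂) (y : X₂), φ.symm (η • y) = b (η, y) • φ.symm y)
    (htf₂ : ∀ η : Γ₂, η ≠ 1 → Dense {y : X₂ | η • y ≠ y}) :
    ∀ (γ γ' : Γ₁) (x : X₁), a (γ' * γ, x) = a (γ', γ • x) * a (γ, x) := by
  intro γ γ' x₀
  set η : X₁ → Γ₂ := fun x => (a (γ', γ • x) * a (γ, x))⁻¹ * a (γ' * γ, x) with hη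
  have hηcont : Continuous η := by
    refine Continuous.mul (Continuous.inv (Continuous.mul ?_ ?_)) ?_
    · exact ha.comp (continuous_const.prodMk (continuous_const_smul γ))
    · exact ha.comp (continuous_const.prodMk continuous_id)
    · exact ha.comp (continuous_const.prodMk continuous_id)
  have hfix : ∀ x : X₁, η x • φ x = φ x := by
    intro x
    have h1 : φ ((γ' * γ) • x) = a (γ' * γ, x) • φ x := hφ _ _
    have h2 : φ ((γ' * γ) • x) = (a (γ', γ • x) * a (γ, x)) • φ x := by
      rw [mul_smul, hφ γ' (γ • x), hφ γ x, mul_smul]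
    have h3 : a (γ' * γ, x) • φ x = (a (γ', γ • x) * a (γ, x)) • φ x := by
      rw [← h1, h2]
    rw [hη]
    dsimp only
    rw [mul_smul, h3, inv_smul_smul]
  by_contra hne
  have hη0 : η x₀ ≠ 1 := by
    simp only [hη, Ne, inv_mul_eq_one]
    exact fun h => hne h.symm
  have hopen : IsOpen (η ⁻¹' {η x₀}) :=
    hηcont.isOpen_preimage _ (isOpen_discrete _)
  have hopen2 : IsOpen (φ '' (η ⁻¹' {η x₀})) := φ.isOpenMap _ hopen
  have hne2 : (φ '' (η ⁻¹' {η x₀})).Nonempty := ⟨φ x₀, x₀, rfl, rfl⟩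
  obtain ⟨y, hy1, hy2⟩ := (htf₂ (η x₀) hη0).exists_mem_open hopen2 hne2
  obtain ⟨x, hx, rfl⟩ := hy2
  have hxx : η x = η x₀ := hx
  exact hy1 (by rw [← hxx]; exact hfix x)
end

section
/- Let Γ₁ ⊂ X₁ and Γ₂ ⊂ X₂ be continuous actions of discrete groups on topological spaces, continuous orbit equivalent via φ, a, b, and assume both actions are topologically free. Then for all γ ∈ Γ₁ and x ∈ X₁ one has b(a(γ,x), φ(x)) = γ, and for all η ∈ Γ₂ and y ∈ X₂ one has a(b(η,y), φ⁻¹(y)) = η. -/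
/-- If a continuous map into a discrete group fixes every point and the action is
topologically free, the map is constantly `1`. -/
lemma coe_aux {Γ X : Type*} [Group Γ] [TopologicalSpace Γ] [DiscreteTopology Γ]
    [TopologicalSpace X] [MulAction Γ X]
    (f : X → Γ) (hf : Continuous f) (hfix : ∀ x, f x • x = x)
    (htf : ∀ γ : Γ, γ ≠ 1 → Dense {x : X | γ • x ≠ x}) (x : X) : f x = 1 := by
  by_contra h
  obtain ⟨y, hy, hyU⟩ := (htf (f x) h).exists_mem_open
    (hf.isOpen_preimage _ (isOpen_discrete {f x})) ⟨x, rfl⟩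
  have hfy : f y = f x := hyU
  exact hy (by rw [← hfy]; exact hfix y)

/-- for topologically free continuous orbit equivalent actions the
cocycles `a` and `b` are inverse to each other:
`b(a(γ,x), φ(x)) = γ` and `a(b(η,y), φ⁻¹(y)) = η`. -/
theorem stmt1 {Γ₁ Γ₂ X₁ X₂ : Type*} [Group Γ₁] [Group Γ₂]
    [TopologicalSpace Γ₁] [DiscreteTopology Γ₁]
    [TopologicalSpace Γ₂] [DiscreteTopology Γ₂]
    [TopologicalSpace X₁] [TopologicalSpace X₂]
    [MulAction Γ₁ X₁] [MulAction Γ₂ X₂]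
    [ContinuousConstSMul Γ₁ X₁] [ContinuousConstSMul Γ₂ X₂]
    (φ : X₁ ≃ₜ X₂) (a : Γ₁ × X₁ → Γ₂) (b : Γ₂ × X₂ → Γ₁)
    (ha : Continuous a) (hb : Continuous b)
    (hφ : ∀ (γ : Γ₁) (x : X₁), φ (γ • x) = a (γ, x) • φ x)
    (hφ' : ∀ (η : Γ₂) (y : X₂), φ.symm (η • y) = b (η, y) • φ.symm y)
    (htf₁ : ∀ γ : Γ₁, γ ≠ 1 → Dense {x : X₁ | γ • x ≠ x})
    (htf₂ : ∀ η : Γ₂, η ≠ 1 → Dense {y : X₂ | η • y ≠ y}) :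
    (∀ (γ : Γ₁) (x : X₁), b (a (γ, x), φ x) = γ) ∧
    (∀ (η : Γ₂) (y : X₂), a (b (η, y), φ.symm y) = η) := by
  constructor
  · intro γ x
    have key : ∀ x : X₁, b (a (γ, x), φ x) • x = γ • x := by
      intro x
      have := hφ' (a (γ, x)) (φ x)
      rw [← hφ γ x, φ.symm_apply_apply, φ.symm_apply_apply] at this
      exact this.symm
    have h1 := coe_aux (fun x => γ⁻¹ * b (a (γ, x), φ x))
      (continuous_const.mul (hb.comp ((ha.comp (continuous_const.prodMk
        continuous_id)).prodMk φ.continuous)))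
      (fun x => by rw [mul_smul, key, inv_smul_smul]) htf₁ x
    have : γ⁻¹ * b (a (γ, x), φ x) = 1 := h1
    calc b (a (γ, x), φ x) = γ * (γ⁻¹ * b (a (γ, x), φ x)) := by group
      _ = γ := by rw [this, mul_one]
  · intro η y
    have key : ∀ y : X₂, a (b (η, y), φ.symm y) • y = η • y := by
      intro y
      have := hφ (b (η, y)) (φ.symm y)
      rw [← hφ' η y, φ.apply_symm_apply, φ.apply_symm_apply] at this
      exact this.symm
    have h1 := coe_aux (fun y => η⁻¹ * a (b (η, y), φ.symm y))
      (continuous_const.mul (ha.comp ((hb.comp (continuous_const.prodMk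
        continuous_id)).prodMk φ.symm.continuous)))
      (fun y => by rw [mul_smul, key, inv_smul_smul]) htf₂ y
    have : η⁻¹ * a (b (η, y), φ.symm y) = 1 := h1
    calc a (b (η, y), φ.symm y) = η * (η⁻¹ * a (b (η, y), φ.symm y)) := by group
      _ = η := by rw [this, mul_one]
end

section
/- Let Γ₁ ⊂ X₁ and Γ₂ ⊂ X₂ be topologically free continuous orbit equivalent actions via homeomorphism φ and cocycles a, b. For x ∈ X₁ let U_x = {u : a(γ,u) = a(γ,x) ∀γ ∈ Γ₁}, for y ∈ X₂ let V_y = {v : b(η,v) = b(η,y) ∀η ∈ Γ₂}, and set Û_x = U_x ∩ φ⁻¹(V_{φ(x)}). Then γ · Û_x = Û_{γ·x} for all γ ∈ Γ₁, x ∈ X₁. -/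
section aux
variable {Γ₁ Γ₂ X₁ X₂ : Type*} [Group Γ₁] [Group Γ₂]
    [TopologicalSpace Γ₁] [DiscreteTopology Γ₁]
    [TopologicalSpace Γ₂] [DiscreteTopology Γ₂]
    [TopologicalSpace X₁] [TopologicalSpace X₂]
    [MulAction Γ₁ X₁] [MulAction Γ₂ X₂]

/-- Generic rigidity: continuous cocycle-like map that fixes points of an open map's image
is trivial. -/
theorem coe_rigid {G Y Z : Type*} [Group G] [TopologicalSpace G] [DiscreteTopology G]
    [TopologicalSpace Y] [TopologicalSpace Z] [MulAction G Y]
    (f : Z → Y) (hf : IsOpenMap f)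
    (htf : ∀ g : G, g ≠ 1 → Dense {y : Y | g • y ≠ y})
    (c : Z → G) (hc : Continuous c) (h : ∀ z, c z • f z = f z) : ∀ z, c z = 1 := by
  intro z
  by_contra hne
  have hopen : IsOpen (f '' (c ⁻¹' {c z})) := hf _ ((isOpen_discrete _).preimage hc)
  obtain ⟨y, hy1, hy2⟩ := (htf (c z) hne).exists_mem_open hopen ⟨f z, z, rfl, rfl⟩
  obtain ⟨u, hu, rfl⟩ := hy2
  have : c u = c z := hu
  exact hy1 (this ▸ h u)

end aux

/-- with `Û_x = U_x ∩ φ⁻¹(V_{φ(x)})`, one has `γ · Û_x = Û_{γ·x}`. -/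
theorem stmt8 {Γ₁ Γ₂ X₁ X₂ : Type*} [Group Γ₁] [Group Γ₂]
    [TopologicalSpace Γ₁] [DiscreteTopology Γ₁]
    [TopologicalSpace Γ₂] [DiscreteTopology Γ₂]
    [TopologicalSpace X₁] [TopologicalSpace X₂]
    [MulAction Γ₁ X₁] [MulAction Γ₂ X₂]
    [ContinuousConstSMul Γ₁ X₁] [ContinuousConstSMul Γ₂ X₂]
    (φ : X₁ ≃ₜ X₂) (a : Γ₁ × X₁ → Γ₂) (b : Γ₂ × X₂ → Γ₁)
    (ha : Continuous a) (hb : Continuous b)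
    (hφ : ∀ (γ : Γ₁) (x : X₁), φ (γ • x) = a (γ, x) • φ x)
    (hφ' : ∀ (η : Γ₂) (y : X₂), φ.symm (η • y) = b (η, y) • φ.symm y)
    (htf₁ : ∀ γ : Γ₁, γ ≠ 1 → Dense {x : X₁ | γ • x ≠ x})
    (htf₂ : ∀ η : Γ₂, η ≠ 1 → Dense {y : X₂ | η • y ≠ y}) :
    ∀ (γ : Γ₁) (x : X₁),
      (fun u : X₁ => γ • u) ''
          {u : X₁ | (∀ δ : Γ₁, a (δ, u) = a (δ, x)) ∧
            (∀ η : Γ₂, b (η, φ u) = b (η, φ x))} =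
        {u : X₁ | (∀ δ : Γ₁, a (δ, u) = a (δ, γ • x)) ∧
            (∀ η : Γ₂, b (η, φ u) = b (η, φ (γ • x)))} := by
  -- cocycle identity for a
  have coc_a : ∀ (γ' γ : Γ₁) (x : X₁), a (γ' * γ, x) = a (γ', γ • x) * a (γ, x) := by
    intro γ' γ x
    set c : X₁ → Γ₂ := fun x => (a (γ', γ • x) * a (γ, x))⁻¹ * a (γ' * γ, x) with hcdef
    have hp : Continuous fun x : X₁ => ((a (γ', γ • x), a (γ, x)), a (γ' * γ, x)) :=
      (((ha.comp (continuous_const.prodMk (continuous_const_smul γ))).prodMk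
        (ha.comp (continuous_const.prodMk continuous_id))).prodMk
        (ha.comp (continuous_const.prodMk continuous_id)))
    have hc : Continuous c :=
      (continuous_of_discreteTopology
        (f := fun q : (Γ₂ × Γ₂) × Γ₂ => (q.1.1 * q.1.2)⁻¹ * q.2)).comp hp
    have h : ∀ x, c x • φ x = φ x := by
      intro x
      have h1 : a (γ' * γ, x) • φ x = (a (γ', γ • x) * a (γ, x)) • φ x := by
        rw [← hφ, mul_smul, mul_smul, hφ, hφ]
      simp only [hcdef]
      rw [mul_smul, h1, inv_smul_smul]
    have := coe_rigid (G := Γ₂) φ φ.isOpenMap htf₂ c hc h x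
    have h2 : (a (γ', γ • x) * a (γ, x))⁻¹ * a (γ' * γ, x) = 1 := this
    rw [inv_mul_eq_one] at h2
    exact h2.symm
  -- cocycle identity for b
  have coc_b : ∀ (η' η : Γ₂) (y : X₂), b (η' * η, y) = b (η', η • y) * b (η, y) := by
    intro η' η y
    set c : X₂ → Γ₁ := fun y => (b (η', η • y) * b (η, y))⁻¹ * b (η' * η, y) with hcdef
    have hp : Continuous fun y : X₂ => ((b (η', η • y), b (η, y)), b (η' * η, y)) :=
      (((hb.comp (continuous_const.prodMk (continuous_const_smul η))).prodMk
        (hb.comp (continuous_const.prodMk continuous_id))).prodMk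
        (hb.comp (continuous_const.prodMk continuous_id)))
    have hc : Continuous c :=
      (continuous_of_discreteTopology
        (f := fun q : (Γ₁ × Γ₁) × Γ₁ => (q.1.1 * q.1.2)⁻¹ * q.2)).comp hp
    have h : ∀ y, c y • φ.symm y = φ.symm y := by
      intro y
      have h1 : b (η' * η, y) • φ.symm y = (b (η', η • y) * b (η, y)) • φ.symm y := by
        rw [← hφ', mul_smul, mul_smul, hφ', hφ']
      simp only [hcdef]
      rw [mul_smul, h1, inv_smul_smul]
    have := coe_rigid (G := Γ₁) φ.symm φ.symm.isOpenMap htf₁ c hc h y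
    have h2 : (b (η', η • y) * b (η, y))⁻¹ * b (η' * η, y) = 1 := this
    rw [inv_mul_eq_one] at h2
    exact h2.symm
  -- inverse relation
  have inv_ba : ∀ (γ : Γ₁) (x : X₁), b (a (γ, x), φ x) = γ := by
    intro γ x
    set c : X₁ → Γ₁ := fun x => γ⁻¹ * b (a (γ, x), φ x) with hcdef
    have hp : Continuous fun x : X₁ => b (a (γ, x), φ x) :=
      hb.comp ((ha.comp (continuous_const.prodMk continuous_id)).prodMk φ.continuous)
    have hc : Continuous c :=
      (continuous_of_discreteTopology (f := fun g : Γ₁ => γ⁻¹ * g)).comp hp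
    have h : ∀ x, c x • x = x := by
      intro x
      have h1 : b (a (γ, x), φ x) • x = γ • x := by
        have := hφ' (a (γ, x)) (φ x)
        rw [← hφ γ x, Homeomorph.symm_apply_apply, Homeomorph.symm_apply_apply] at this
        exact this.symm
      simp only [hcdef, mul_smul, h1, inv_smul_smul]
    have h2 : γ⁻¹ * b (a (γ, x), φ x) = 1 :=
      coe_rigid (G := Γ₁) (fun x : X₁ => x) IsOpenMap.id htf₁ c hc h x
    rw [inv_mul_eq_one] at h2
    exact h2.symm
  -- main inclusion
  have main : ∀ (γ : Γ₁) (x u : X₁),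
      ((∀ δ : Γ₁, a (δ, u) = a (δ, x)) ∧ (∀ η : Γ₂, b (η, φ u) = b (η, φ x))) →
      ((∀ δ : Γ₁, a (δ, γ • u) = a (δ, γ • x)) ∧
        (∀ η : Γ₂, b (η, φ (γ • u)) = b (η, φ (γ • x)))) := by
    intro γ x u ⟨hA, hB⟩
    constructor
    · intro δ
      have h1 : a (δ, γ • u) * a (γ, u) = a (δ, γ • x) * a (γ, x) := by
        rw [← coc_a, ← coc_a, hA]
      rw [hA γ] at h1
      exact mul_right_cancel h1
    · intro η
      have key : ∀ v : X₁, b (η, φ (γ • v)) = b (η * a (γ, v), φ v) * γ⁻¹ := by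
        intro v
        rw [hφ γ v]
        have := coc_b η (a (γ, v)) (φ v)
        rw [inv_ba] at this
        rw [eq_mul_inv_iff_mul_eq, ← this]
      rw [key u, key x, hA γ, hB]
  intro γ x
  ext v
  constructor
  · rintro ⟨u, hu, rfl⟩
    exact main γ x u hu
  · intro hv
    refine ⟨γ⁻¹ • v, ?_, smul_inv_smul γ v⟩
    have := main γ⁻¹ (γ • x) v hv
    rwa [inv_smul_smul] at this
end

section
/- Let G₁, G₂ be groupoids with discrete group actions Γᵢ ⊂ Gᵢ. Suppose ψ : Γ₁ ⋉ G₁ → Γ₂ ⋉ G₂ is a groupoid isomorphism satisfying ψ({e₁} × G₁) = {e₂} × G₂ and ψ(Γ₁ × G₁⁽⁰⁾) = Γ₂ × G₂⁽⁰⁾. Write ψ(e₁, g) = (e₂, φ(g)) for a map φ : G₁ → G₂. Then φ is a groupoid isomorphism, and defining a(γ, u) as the Γ₂-component of ψ(γ, u) for u ∈ G₁⁽⁰⁾, one has ψ(γ, g) = (a(γ, r(g)), φ(g)) and φ(γ·g) = a(γ, r(g))·φ(g) for all γ ∈ Γ₁, g ∈ G₁. -/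
/-- An algebraic (small, "one-type") groupoid: a set `G` of morphisms with
source and range maps `src, rng : G → G` landing in the units, a composability
predicate `comp`, a (partially meaningful) multiplication and an inversion. -/
structure AlgGroupoid (G : Type*) where
  src : G → G
  rng : G → G
  comp : G → G → Prop
  mul : G → G → G
  inv : G → G
  comp_iff : ∀ g h, comp g h ↔ src g = rng h
  mul_assoc' : ∀ g h k, comp g h → comp h k → mul (mul g h) k = mul g (mul h k)
  src_mul : ∀ g h, comp g h → src (mul g h) = src h
  rng_mul : ∀ g h, comp g h → rng (mul g h) = rng g
  src_src : ∀ g, src (src g) = src g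
  rng_rng : ∀ g, rng (rng g) = rng g
  src_rng : ∀ g, src (rng g) = rng g
  rng_src : ∀ g, rng (src g) = src g
  mul_src : ∀ g, mul g (src g) = g
  rng_mul' : ∀ g, mul (rng g) g = g
  inv_inv : ∀ g, inv (inv g) = g
  src_inv : ∀ g, src (inv g) = rng g
  mul_inv : ∀ g, mul g (inv g) = rng g
  inv_mul : ∀ g, mul (inv g) g = src g

/-- An action of a group `Γ` on a groupoid `(G, S)` by groupoid automorphisms,
encoded via a `MulAction Γ G`: each `γ ∈ Γ` acts as a groupoid automorphism. -/
def IsGroupoidMulAction (Γ : Type*) [Group Γ] {G : Type*} [MulAction Γ G]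
    (S : AlgGroupoid G) : Prop :=
  (∀ (γ : Γ) (g h : G), S.comp g h → S.comp (γ • g) (γ • h)) ∧
  (∀ (γ : Γ) (g h : G), S.comp g h → γ • S.mul g h = S.mul (γ • g) (γ • h)) ∧
  (∀ (γ : Γ) (g : G), γ • S.inv g = S.inv (γ • g)) ∧
  (∀ (γ : Γ) (g : G), γ • S.src g = S.src (γ • g)) ∧
  (∀ (γ : Γ) (g : G), γ • S.rng g = S.rng (γ • g))

/-- `T` is the semidirect product groupoid `Γ ⋉ G` built from the action of `Γ`
on the groupoid `(G, S)`: the underlying set is `Γ × G`, `(γ,g)` and `(γ',g')`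
are composable iff `(γ'⁻¹·g, g')` are composable in `G`, with product
`(γ,g)(γ',g') = (γγ', (γ'⁻¹·g)·g')`, inverse `(γ,g)⁻¹ = (γ⁻¹, γ·g⁻¹)`, source
`s(γ,g) = (e, γ⁻¹·s(g))` and range `r(γ,g) = (e, r(g))`. -/
def SemidirectData (Γ : Type*) [Group Γ] {G : Type*} [MulAction Γ G]
    (S : AlgGroupoid G) (T : AlgGroupoid (Γ × G)) : Prop :=
  (∀ p q : Γ × G, T.comp p q ↔ S.comp (q.1⁻¹ • p.2) q.2) ∧
  (∀ p q : Γ × G, T.mul p q = (p.1 * q.1, S.mul (q.1⁻¹ • p.2) q.2)) ∧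
  (∀ p : Γ × G, T.inv p = (p.1⁻¹, p.1 • S.inv p.2)) ∧
  (∀ p : Γ × G, T.src p = (1, p.1⁻¹ • S.src p.2)) ∧
  (∀ p : Γ × G, T.rng p = (1, S.rng p.2))

/-- if `ψ : Γ₁ ⋉ G₁ → Γ₂ ⋉ G₂` is a groupoid isomorphism with
`ψ({e₁} × G₁) = {e₂} × G₂` and `ψ(Γ₁ × G₁⁽⁰⁾) = Γ₂ × G₂⁽⁰⁾`, then, writing
`ψ(e₁, g) = (e₂, φ(g))` and letting `a(γ, u)` be the `Γ₂`-component of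
`ψ(γ, u)` for units `u`, the map `φ` is a groupoid isomorphism,
`ψ(γ, g) = (a(γ, r(g)), φ(g))`, and `φ(γ·g) = a(γ, r(g))·φ(g)`. -/
theorem stmt18 {Γ₁ Γ₂ G₁ G₂ : Type*} [Group Γ₁] [Group Γ₂]
    [MulAction Γ₁ G₁] [MulAction Γ₂ G₂]
    (S₁ : AlgGroupoid G₁) (S₂ : AlgGroupoid G₂)
    (hact₁ : IsGroupoidMulAction Γ₁ S₁) (hact₂ : IsGroupoidMulAction Γ₂ S₂)
    (T₁ : AlgGroupoid (Γ₁ × G₁)) (T₂ : AlgGroupoid (Γ₂ × G₂))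
    (hT₁ : SemidirectData Γ₁ S₁ T₁) (hT₂ : SemidirectData Γ₂ S₂ T₂)
    (ψ : (Γ₁ × G₁) ≃ (Γ₂ × G₂))
    (hcomp : ∀ p q : Γ₁ × G₁, T₁.comp p q ↔ T₂.comp (ψ p) (ψ q))
    (hmul : ∀ p q : Γ₁ × G₁, T₁.comp p q → ψ (T₁.mul p q) = T₂.mul (ψ p) (ψ q))
    (hinv : ∀ p : Γ₁ × G₁, ψ (T₁.inv p) = T₂.inv (ψ p))
    -- `ψ({e₁} × G₁) = {e₂} × G₂`:
    (hG : ∀ g : G₁, (ψ ((1 : Γ₁), g)).1 = 1)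
    (hG' : ∀ g' : G₂, (ψ.symm ((1 : Γ₂), g')).1 = 1)
    -- `ψ(Γ₁ × G₁⁽⁰⁾) = Γ₂ × G₂⁽⁰⁾`:
    (hU : ∀ (γ : Γ₁) (u : G₁), S₁.src u = u → S₂.src (ψ (γ, u)).2 = (ψ (γ, u)).2)
    (hU' : ∀ (η : Γ₂) (v : G₂), S₂.src v = v →
        S₁.src (ψ.symm (η, v)).2 = (ψ.symm (η, v)).2) :
    -- `φ := g ↦ (ψ(e₁,g)).2` is a groupoid isomorphism:
    Function.Bijective (fun g : G₁ => (ψ ((1 : Γ₁), g)).2) ∧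
    (∀ g h : G₁, S₁.comp g h ↔
        S₂.comp (ψ ((1 : Γ₁), g)).2 (ψ ((1 : Γ₁), h)).2) ∧
    (∀ g h : G₁, S₁.comp g h →
        (ψ ((1 : Γ₁), S₁.mul g h)).2 =
          S₂.mul (ψ ((1 : Γ₁), g)).2 (ψ ((1 : Γ₁), h)).2) ∧
    (∀ g : G₁, (ψ ((1 : Γ₁), S₁.inv g)).2 = S₂.inv (ψ ((1 : Γ₁), g)).2) ∧
    -- `ψ(γ, g) = (a(γ, r(g)), φ(g))` where `a(γ, u) := (ψ(γ, u)).1`: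
    (∀ (γ : Γ₁) (g : G₁),
        ψ (γ, g) = ((ψ (γ, S₁.rng g)).1, (ψ ((1 : Γ₁), g)).2)) ∧
    -- `φ(γ·g) = a(γ, r(g))·φ(g)`:
    (∀ (γ : Γ₁) (g : G₁),
        (ψ ((1 : Γ₁), γ • g)).2 =
          (ψ (γ, S₁.rng g)).1 • (ψ ((1 : Γ₁), g)).2) := by
  obtain ⟨c₁, m₁, i₁, s₁, r₁⟩ := hT₁
  obtain ⟨c₂, m₂, i₂, s₂, r₂⟩ := hT₂
  have hψ1 : ∀ g : G₁, ψ ((1 : Γ₁), g) = ((1 : Γ₂), (ψ ((1 : Γ₁), g)).2) :=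
    fun g => Prod.ext (hG g) rfl
  have unit_rng : ∀ v : G₂, S₂.src v = v → S₂.rng v = v := by
    intro v h; rw [← h, S₂.rng_src, h]
  -- key formula : ψ (γ, g) = (a(γ, r g), φ g)
  have key : ∀ (γ : Γ₁) (g : G₁),
      ψ (γ, g) = ((ψ (γ, S₁.rng g)).1, (ψ ((1 : Γ₁), g)).2) := by
    intro γ g
    have hcmp : T₁.comp (γ, S₁.rng g) ((1 : Γ₁), g) := by
      rw [c₁]; simp only [inv_one, one_smul]
      rw [S₁.comp_iff]; exact S₁.src_rng g
    have hprod : T₁.mul (γ, S₁.rng g) ((1 : Γ₁), g) = (γ, g) := by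
      rw [m₁]; simp only [inv_one, one_smul, mul_one]
      rw [S₁.rng_mul']
    have h1 := hmul _ _ hcmp
    have hc2 := (hcomp _ _).mp hcmp
    rw [hprod, hψ1 g, m₂] at h1
    simp only [inv_one, one_smul, mul_one] at h1
    rw [hψ1 g, c₂] at hc2
    simp only [inv_one, one_smul] at hc2
    rw [S₂.comp_iff] at hc2
    have hv : S₂.src (ψ (γ, S₁.rng g)).2 = (ψ (γ, S₁.rng g)).2 :=
      hU γ (S₁.rng g) (S₁.src_rng g)
    rw [hv] at hc2
    rw [h1, hc2, S₂.rng_mul']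
  refine ⟨⟨?_, ?_⟩, ?_, ?_, ?_, key, ?_⟩
  · -- injective
    intro g h hgh
    simp only at hgh
    have : ψ ((1 : Γ₁), g) = ψ ((1 : Γ₁), h) := by
      rw [hψ1 g, hψ1 h, hgh]
    have := ψ.injective this
    exact (Prod.ext_iff.mp this).2
  · -- surjective
    intro g'
    refine ⟨(ψ.symm ((1 : Γ₂), g')).2, ?_⟩
    have h2 : ((1 : Γ₁), (ψ.symm ((1 : Γ₂), g')).2) = ψ.symm ((1 : Γ₂), g') :=
      Prod.ext (hG' g').symm rfl
    simp only [h2, Equiv.apply_symm_apply]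
  · -- comp iff
    intro g h
    have h2 := hcomp ((1 : Γ₁), g) ((1 : Γ₁), h)
    rw [hψ1 g, hψ1 h, c₁, c₂] at h2
    simpa only [inv_one, one_smul] using h2
  · -- mul
    intro g h hgh
    have hc : T₁.comp ((1 : Γ₁), g) ((1 : Γ₁), h) := by
      rw [c₁]; simpa only [inv_one, one_smul] using hgh
    have h3 := hmul _ _ hc
    rw [hψ1 g, hψ1 h, m₁, m₂] at h3
    simp only [inv_one, one_smul, one_mul, mul_one] at h3
    rw [h3]
  · -- inv
    intro g
    have h4 := hinv ((1 : Γ₁), g)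
    rw [hψ1 g, i₁, i₂] at h4
    simp only [inv_one, one_smul] at h4
    rw [h4]
  · -- equivariance
    intro γ g
    have hcmp' : T₁.comp ((1 : Γ₁), γ • g) (γ, S₁.src g) := by
      rw [c₁]; simp only [inv_smul_smul]
      rw [S₁.comp_iff]; exact (S₁.rng_src g).symm
    have hprod' : T₁.mul ((1 : Γ₁), γ • g) (γ, S₁.src g) = (γ, g) := by
      rw [m₁]; simp only [inv_smul_smul, one_mul]
      rw [S₁.mul_src]
    have h5 := hmul _ _ hcmp'
    have hc5 := (hcomp _ _).mp hcmp'
    rw [hprod', hψ1 (γ • g), m₂] at h5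
    rw [hψ1 (γ • g), c₂] at hc5
    simp only at hc5
    rw [S₂.comp_iff] at hc5
    have hw : S₂.src (ψ (γ, S₁.src g)).2 = (ψ (γ, S₁.src g)).2 :=
      hU γ (S₁.src g) (S₁.src_src g)
    rw [unit_rng _ hw] at hc5
    have e1 : (ψ (γ, g)).2 =
        (ψ (γ, S₁.src g)).1⁻¹ • (ψ ((1 : Γ₁), γ • g)).2 := by
      have h6 := congrArg Prod.snd h5
      simp only at h6
      rw [← hc5, S₂.mul_src] at h6
      exact h6
    have e2 : (ψ (γ, g)).2 = (ψ ((1 : Γ₁), g)).2 := by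
      have := congrArg Prod.snd (key γ g); simpa using this
    have e3 : (ψ (γ, S₁.rng g)).1 = (ψ (γ, S₁.src g)).1 := by
      have a1 := congrArg Prod.fst (key γ g)
      have a2 := congrArg Prod.fst h5
      simp only [one_mul] at a1 a2
      rw [a2] at a1
      exact a1.symm
    rw [e3, ← e2, e1, smul_inv_smul]
end

section
/- Let Γ be a countable discrete group acting topologically freely on a topological space X via homeomorphisms, and suppose the actions Γ₁ ⊂ X₁, Γ₂ ⊂ X₂ are topologically free and continuous orbit equivalent via φ, a, b. Define ψ : Γ₁ × X₁ → Γ₂ × X₂ by ψ(γ, x) = (a(γ, x), φ(x)), where Γᵢ × Xᵢ is the transformation groupoid with product (γ,x)(γ',x') = (γγ', x') when x = γ'·x'. Then ψ is a groupoid isomorphism between the transformation groupoids Γ₁ ⋉ X₁ and Γ₂ ⋉ X₂. -/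
lemma stmt19_key {Γ X : Type*} [Group Γ] [TopologicalSpace Γ] [DiscreteTopology Γ]
    [TopologicalSpace X] [MulAction Γ X]
    (htf : ∀ γ : Γ, γ ≠ 1 → Dense {x : X | γ • x ≠ x})
    {c : X → Γ} (hc : Continuous c) (h : ∀ x, c x • x = x) (x : X) : c x = 1 := by
  by_contra hne
  have hU : IsOpen (c ⁻¹' {c x}) := (isOpen_discrete _).preimage hc
  obtain ⟨y, hy1, hy2⟩ := (htf (c x) hne).exists_mem_open hU ⟨x, rfl⟩
  have : c y = c x := hy2
  exact hy1 (this ▸ h y)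

/-- for countable discrete groups with topologically free,
continuous orbit equivalent actions (via `φ`, `a`, `b`), the map
`ψ(γ, x) = (a(γ, x), φ(x))` is an isomorphism of the transformation groupoids
`Γ₁ ⋉ X₁ → Γ₂ ⋉ X₂`: it is a continuous bijection preserving the groupoid
product `(γ, γ'·x')(γ', x') = (γγ', x')` (together with composability) and the
inversion `(γ, x)⁻¹ = (γ⁻¹, γ·x)`. -/
theorem stmt19 {Γ₁ Γ₂ X₁ X₂ : Type*} [Group Γ₁] [Group Γ₂]
    [Countable Γ₁] [Countable Γ₂]
    [TopologicalSpace Γ₁] [DiscreteTopology Γ₁]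
    [TopologicalSpace Γ₂] [DiscreteTopology Γ₂]
    [TopologicalSpace X₁] [TopologicalSpace X₂]
    [MulAction Γ₁ X₁] [MulAction Γ₂ X₂]
    [ContinuousConstSMul Γ₁ X₁] [ContinuousConstSMul Γ₂ X₂]
    (htf₁ : ∀ γ : Γ₁, γ ≠ 1 → Dense {x : X₁ | γ • x ≠ x})
    (htf₂ : ∀ η : Γ₂, η ≠ 1 → Dense {y : X₂ | η • y ≠ y})
    (φ : X₁ ≃ₜ X₂) (a : Γ₁ × X₁ → Γ₂) (b : Γ₂ × X₂ → Γ₁)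
    (ha : Continuous a) (hb : Continuous b)
    (hφ : ∀ (γ : Γ₁) (x : X₁), φ (γ • x) = a (γ, x) • φ x)
    (hφ' : ∀ (η : Γ₂) (y : X₂), φ.symm (η • y) = b (η, y) • φ.symm y) :
    Function.Bijective (fun p : Γ₁ × X₁ => (a p, φ p.2)) ∧
    Continuous (fun p : Γ₁ × X₁ => (a p, φ p.2)) ∧
    -- `ψ` preserves composability and the product:
    (∀ (γ γ' : Γ₁) (x' : X₁),
        φ (γ' • x') = a (γ', x') • φ x' ∧
        ((a (γ * γ', x') : Γ₂), φ x') =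
          (a (γ, γ' • x') * a (γ', x'), φ x')) ∧
    -- `ψ` preserves inversion:
    (∀ (γ : Γ₁) (x : X₁),
        ((a (γ⁻¹, γ • x) : Γ₂), φ (γ • x)) = ((a (γ, x))⁻¹, a (γ, x) • φ x)) := by
  -- cocycle identity
  have hcoc : ∀ (γ γ' : Γ₁) (x : X₁),
      a (γ * γ', x) = a (γ, γ' • x) * a (γ', x) := by
    intro γ γ' x
    have hcont : Continuous fun y : X₂ =>
        (a (γ, γ' • φ.symm y) * a (γ', φ.symm y))⁻¹ * a (γ * γ', φ.symm y) := by
      fun_prop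
    have h := stmt19_key htf₂ hcont (fun y => ?_) (φ x)
    · have h' := h
      simp only [Homeomorph.symm_apply_apply] at h'
      have := inv_mul_eq_one.mp h'
      exact this.symm
    · have e1 : φ ((γ * γ') • φ.symm y) = a (γ * γ', φ.symm y) • y := by
        rw [hφ, Homeomorph.apply_symm_apply]
      have e2 : φ ((γ * γ') • φ.symm y)
          = (a (γ, γ' • φ.symm y) * a (γ', φ.symm y)) • y := by
        rw [mul_smul, hφ, hφ, Homeomorph.apply_symm_apply, mul_smul]
      rw [mul_smul, ← e1, e2, inv_smul_smul]
  have ha1 : ∀ x : X₁, a (1, x) = 1 := by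
    intro x
    have hcont : Continuous fun y : X₂ => a (1, φ.symm y) := by fun_prop
    have h := stmt19_key htf₂ hcont (fun y => ?_) (φ x)
    · simpa using h
    · have := hφ 1 (φ.symm y)
      simp only [one_smul, Homeomorph.apply_symm_apply] at this
      exact this.symm
  -- inversion
  have hinv : ∀ (γ : Γ₁) (x : X₁), a (γ⁻¹, γ • x) = (a (γ, x))⁻¹ := by
    intro γ x
    have := hcoc γ⁻¹ γ x
    rw [inv_mul_cancel, ha1] at this
    exact eq_inv_of_mul_eq_one_left this.symm
  -- inverse formulas for b
  have hba : ∀ (γ : Γ₁) (x : X₁), b (a (γ, x), φ x) = γ := by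
    intro γ x
    have hcont : Continuous fun x : X₁ => γ⁻¹ * b (a (γ, x), φ x) := by fun_prop
    have h := stmt19_key htf₁ hcont (fun x => ?_) x
    · exact (inv_mul_eq_one.mp h).symm
    · have e1 : φ.symm (a (γ, x) • φ x) = b (a (γ, x), φ x) • x := by
        rw [hφ', Homeomorph.symm_apply_apply]
      rw [mul_smul, ← e1, ← hφ, Homeomorph.symm_apply_apply, inv_smul_smul]
  have hab : ∀ (η : Γ₂) (y : X₂), a (b (η, y), φ.symm y) = η := by
    intro η y
    have hcont : Continuous fun y : X₂ => η⁻¹ * a (b (η, y), φ.symm y) := by fun_prop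
    have h := stmt19_key htf₂ hcont (fun y => ?_) y
    · exact (inv_mul_eq_one.mp h).symm
    · have e1 : φ (b (η, y) • φ.symm y) = a (b (η, y), φ.symm y) • y := by
        rw [hφ, Homeomorph.apply_symm_apply]
      rw [mul_smul, ← e1, ← hφ', Homeomorph.apply_symm_apply, inv_smul_smul]
  refine ⟨?_, by fun_prop, ?_, ?_⟩
  · apply Function.bijective_iff_has_inverse.mpr
    refine ⟨fun q : Γ₂ × X₂ => (b q, φ.symm q.2), fun p => ?_, fun q => ?_⟩
    · simp [hba p.1 p.2]
    · simp [hab q.1 q.2]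
  · intro γ γ' x'
    exact ⟨hφ γ' x', by rw [hcoc]⟩
  · intro γ x
    rw [hinv, hφ]
end
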